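/- Let 0 < ε < π/2 and let u', u, v', v ∈ ℝ² with u' ≠ u, v' ≠ v and u ≠ v. Suppose the angle between the vector u − u' and e₂ = (0,1) is at most ε/2, the angle between the vector v − v' and e₂ is at most ε/2, and the undirected angles satisfy ∠ u' u v ≤ π/2 and ∠ v' v u ≤ π/2. Then the angle between the vector v − u and e₂ lies in the interval [π/2 − ε/2, π/2 + ε/2]; that is, v − u forms an angle of at most ε/2 with the horizontal axis. -/

import Mathlib

open Real EuclideanGeometry
open scoped RealInnerProductSpace

noncomputable section

abbrev Pt : Type := EuclideanSpace ℝ (Fin 2)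

/-- The upward unit vector `e₂ = (0, 1)`. -/
def e2 : Pt := EuclideanSpace.single (1 : Fin 2) (1 : ℝ)

lemma angle_abs_toReal_add (a b : Real.Angle) :
    |(a + b).toReal| ≤ |a.toReal| + |b.toReal| := by
  rcases le_or_gt π (|a.toReal| + |b.toReal|) with h | h
  · exact (Real.Angle.abs_toReal_le_pi _).trans h
  · have hs : |a.toReal + b.toReal| < π := (abs_add_le _ _).trans_lt h
    have : ((a.toReal + b.toReal : ℝ) : Real.Angle) = a + b := by
      rw [Real.Angle.coe_add, Real.Angle.coe_toReal, Real.Angle.coe_toReal]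
    rw [← this, Real.Angle.toReal_coe_eq_self_iff.2
      ⟨neg_lt_of_abs_lt hs, (le_abs_self _).trans hs.le⟩]
    exact abs_add_le _ _

lemma angle_triangle (x y z : Pt) (hx : x ≠ 0) (hy : y ≠ 0) (hz : z ≠ 0) :
    InnerProductGeometry.angle x z ≤
      InnerProductGeometry.angle x y + InnerProductGeometry.angle y z := by
  haveI : Fact (Module.finrank ℝ Pt = 2) := ⟨finrank_euclideanSpace_fin⟩
  set o : Orientation ℝ Pt (Fin 2) := (EuclideanSpace.basisFun (Fin 2) ℝ).toBasis.orientation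
  rw [o.angle_eq_abs_oangle_toReal hx hz, o.angle_eq_abs_oangle_toReal hx hy,
    o.angle_eq_abs_oangle_toReal hy hz, ← o.oangle_add hx hy hz]
  exact angle_abs_toReal_add _ _

lemma e2_ne_zero : e2 ≠ 0 := by
  intro h
  have := congrArg (fun x : Pt => x 1) h
  simp [e2, EuclideanSpace.single_apply] at this

/-- If the edges into `u` and `v` are almost vertical (angle at most `ε/2` with
`e₂`) and the angles `∠ u' u v` and `∠ v' v u` are at most `90°`, then the
segment `uv` is almost horizontal: the angle of `v - u` with `e₂` lies in
`[π/2 - ε/2, π/2 + ε/2]`. -/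
theorem stmt9 (ε : ℝ) (hε0 : 0 < ε) (hε : ε < π / 2)
    (u' u v' v : Pt) (hu'u : u' ≠ u) (hv'v : v' ≠ v) (huv : u ≠ v)
    (hu2 : InnerProductGeometry.angle (u - u') e2 ≤ ε / 2)
    (hv2 : InnerProductGeometry.angle (v - v') e2 ≤ ε / 2)
    (hau : ∠ u' u v ≤ π / 2) (hav : ∠ v' v u ≤ π / 2) :
    π / 2 - ε / 2 ≤ InnerProductGeometry.angle (v - u) e2 ∧
    InnerProductGeometry.angle (v - u) e2 ≤ π / 2 + ε / 2 := by
  have hu'u0 : u' - u ≠ 0 := sub_ne_zero.2 hu'u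
  have hv'v0 : v' - v ≠ 0 := sub_ne_zero.2 hv'v
  have hvu0 : v - u ≠ 0 := sub_ne_zero.2 huv.symm
  have huv0 : u - v ≠ 0 := sub_ne_zero.2 huv
  have hau' : InnerProductGeometry.angle (u' - u) (v - u) ≤ π / 2 := by
    rw [EuclideanGeometry.angle, vsub_eq_sub, vsub_eq_sub] at hau
    exact hau
  have hav' : InnerProductGeometry.angle (v' - v) (u - v) ≤ π / 2 := by
    rw [EuclideanGeometry.angle, vsub_eq_sub, vsub_eq_sub] at hav
    exact hav
  have hneg_u : InnerProductGeometry.angle (u' - u) e2 =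
      π - InnerProductGeometry.angle (u - u') e2 := by
    rw [← InnerProductGeometry.angle_neg_left, neg_sub]
  have hneg_v : InnerProductGeometry.angle (v' - v) e2 =
      π - InnerProductGeometry.angle (v - v') e2 := by
    rw [← InnerProductGeometry.angle_neg_left, neg_sub]
  have hneg_uv : InnerProductGeometry.angle (u - v) e2 =
      π - InnerProductGeometry.angle (v - u) e2 := by
    rw [← InnerProductGeometry.angle_neg_left, neg_sub]
  constructor
  · have h1 := angle_triangle (u' - u) (v - u) e2 hu'u0 hvu0 e2_ne_zero
    rw [hneg_u] at h1
    have := InnerProductGeometry.angle_comm (u' - u) (v - u)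
    linarith
  · have h2 := angle_triangle (v' - v) (u - v) e2 hv'v0 huv0 e2_ne_zero
    rw [hneg_v, hneg_uv] at h2
    have := InnerProductGeometry.angle_comm (v' - v) (u - v)
    linarith
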